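/- Let H be a complex inner product space, q ∈ ℝ, and let ξ, ξ₁, …, ξₙ ∈ H be such that ⟨ξᵢ, ξ⟩ = 0 = ⟨ξ, ξᵢ⟩ for all 1 ≤ i ≤ n. Then there exists an operator T in the unital algebra of linear endomorphisms of F(H) generated by the field operators s_{ξ₁}, …, s_{ξₙ} such that T(ξ^{⊗k}) = ξ₁⊗…⊗ξₙ⊗ξ^{⊗k} for every k ≥ 0 (with the convention ξ^{⊗0} = Ω, so in particular T(Ω) = ξ₁⊗…⊗ξₙ). -/

import Mathlib

noncomputable section

variable {H : Type*} [NormedAddCommGroup H] [InnerProductSpace ℂ H]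

/-- The simple tensor `ζ 0 ⊗ ⋯ ⊗ ζ (n-1)` in the algebraic Fock space
`F(H) = ⨁ₙ H^{⊗n}`, realized as the tensor algebra (for `n = 0` this is the
vacuum vector `Ω = 1`). -/
def st (n : ℕ) (ζ : Fin n → H) : TensorAlgebra ℂ H :=
  (List.ofFn fun i => TensorAlgebra.ι ℂ (ζ i)).prod

/-- Remove the `i`-th entry from a tuple. -/
def removeNth {α : Type*} : {n : ℕ} → Fin n → (Fin n → α) → Fin (n - 1) → α
  | 0, i, _ => i.elim0
  | _ + 1, i, ζ => fun j => ζ (i.succAbove j)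

/-- `c` is the family of `q`-creation operators. -/
def IsCreation (c : H → Module.End ℂ (TensorAlgebra ℂ H)) : Prop :=
  ∀ (ξ : H) (n : ℕ) (ζ : Fin n → H), c ξ (st n ζ) = st (n + 1) (Fin.cons ξ ζ)

/-- `a` is the family of `q`-annihilation operators. -/
def IsAnnihilation (q : ℝ) (a : H → Module.End ℂ (TensorAlgebra ℂ H)) : Prop :=
  ∀ (ξ : H) (n : ℕ) (ζ : Fin n → H),
    a ξ (st n ζ) =
      ∑ i : Fin n, ((q : ℂ) ^ (i : ℕ) * (inner ℂ ξ (ζ i) : ℂ)) • st (n - 1) (removeNth i ζ)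

def st' (l : List H) : TensorAlgebra ℂ H := (l.map (TensorAlgebra.ι ℂ)).prod

lemma st_eq_st' (n : ℕ) (ζ : Fin n → H) : st n ζ = st' (List.ofFn ζ) := by
  unfold st st'
  rw [List.map_ofFn]
  rfl

lemma st'_append (l₁ l₂ : List H) : st' (l₁ ++ l₂) = st' l₁ * st' l₂ := by
  simp [st']

lemma removeNth_succ {α : Type*} {m : ℕ} (i : Fin (m + 1)) (ζ : Fin (m + 1) → α) :
    removeNth i ζ = fun j => ζ (i.succAbove j) := rfl

lemma ofFn_removeNth {n : ℕ} (i : Fin n) (ζ : Fin n → H) :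
    List.ofFn (removeNth i ζ) = (List.ofFn ζ).eraseIdx i := by
  cases n with
  | zero => exact i.elim0
  | succ m =>
    apply List.ext_getElem
    · simp [List.length_eraseIdx, i.isLt]
    · intro j h1 h2
      simp only [List.getElem_ofFn, List.getElem_eraseIdx]
      simp only [List.length_ofFn] at h1
      split
      · next h' =>
        simp only [removeNth_succ]
        congr 1
        rw [Fin.succAbove_of_castSucc_lt]
        · rfl
        · exact (Fin.lt_iff_val_lt_val).2 (by simpa using h')
      · next h' =>
        simp only [removeNth_succ, List.getElem_ofFn]
        congr 1
        rw [Fin.succAbove_of_le_castSucc]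
        · rfl
        · exact (Fin.le_iff_val_le_val).2 (by simpa using Nat.le_of_not_lt h')

lemma hc' {c : H → Module.End ℂ (TensorAlgebra ℂ H)} (hc : IsCreation c)
    (ψ : H) (l : List H) : c ψ (st' l) = st' (ψ :: l) := by
  have h := hc ψ l.length l.get
  rw [st_eq_st', st_eq_st', List.ofFn_get] at h
  rw [h]
  congr 1
  rw [List.ofFn_succ]
  simp [List.ofFn_get]

lemma ha' {q : ℝ} {a : H → Module.End ℂ (TensorAlgebra ℂ H)} (ha : IsAnnihilation q a)
    (ψ : H) (l : List H) :
    a ψ (st' l) = ∑ i ∈ Finset.range l.length,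
      ((q : ℂ) ^ i * (inner ℂ ψ (l.getD i 0) : ℂ)) • st' (l.eraseIdx i) := by
  have h := ha ψ l.length l.get
  rw [st_eq_st', List.ofFn_get] at h
  rw [h, ← Fin.sum_univ_eq_sum_range
    (fun i => ((q : ℂ) ^ i * (inner ℂ ψ (l.getD i 0) : ℂ)) • st' (l.eraseIdx i))]
  apply Finset.sum_congr rfl
  intro i _
  rw [st_eq_st', ofFn_removeNth, List.ofFn_get, List.getD_eq_getElem l 0 i.isLt]
  rfl

lemma main_aux (q : ℝ) (c a : H → Module.End ℂ (TensorAlgebra ℂ H))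
    (hc : IsCreation c) (ha : IsAnnihilation q a) (ξ : H) :
    ∀ (N : ℕ) (L : List H), L.length ≤ N →
    (∀ x ∈ L, (inner ℂ x ξ : ℂ) = 0 ∧ (inner ℂ ξ x : ℂ) = 0) →
    ∃ T : Module.End ℂ (TensorAlgebra ℂ H),
      T ∈ Algebra.adjoin ℂ ((fun x => c x + a x) '' {x | x ∈ L}) ∧
      ∀ k : ℕ, T (st' (List.replicate k ξ)) = st' L * st' (List.replicate k ξ) := by
  intro N
  induction N with
  | zero =>
    intro L hL _
    rw [Nat.le_zero, List.length_eq_zero_iff] at hL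
    subst hL
    exact ⟨1, Subalgebra.one_mem _, fun k => by simp [st']⟩
  | succ N ih =>
    intro L hL horth
    match L with
    | [] => exact ⟨1, Subalgebra.one_mem _, fun k => by simp [st']⟩
    | ψ :: L' =>
      simp only [List.length_cons, Nat.add_le_add_iff_right] at hL
      set m := L'.length with hm
      obtain ⟨T₁, hT₁mem, hT₁⟩ := ih L' hL (fun x hx => horth x (List.mem_cons_of_mem _ hx))
      have hTi : ∀ i : Fin m, ∃ T₂ : Module.End ℂ (TensorAlgebra ℂ H),
          T₂ ∈ Algebra.adjoin ℂ ((fun x => c x + a x) '' {x | x ∈ L'.eraseIdx i}) ∧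
          ∀ k : ℕ, T₂ (st' (List.replicate k ξ)) =
            st' (L'.eraseIdx i) * st' (List.replicate k ξ) := by
        intro i
        refine ih (L'.eraseIdx i) ?_ (fun x hx => horth x
          (List.mem_cons_of_mem _ (List.eraseIdx_subset hx)))
        rw [List.length_eraseIdx]
        simp only [← hm, i.isLt, if_pos]
        omega
      choose T₂ hT₂mem hT₂ using hTi
      set S := Algebra.adjoin ℂ ((fun x => c x + a x) '' {x | x ∈ ψ :: L'}) with hS
      have hsub : ∀ x : H, x ∈ L' → (fun x => c x + a x) x ∈
          ((fun x => c x + a x) '' {x | x ∈ ψ :: L'}) :=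
        fun x hx => ⟨x, List.mem_cons_of_mem _ hx, rfl⟩
      refine ⟨(c ψ + a ψ) * T₁ - ∑ i : Fin m,
        ((q : ℂ) ^ (i : ℕ) * (inner ℂ ψ (L'.getD i 0) : ℂ)) • T₂ i, ?_, ?_⟩
      · refine Subalgebra.sub_mem _ (Subalgebra.mul_mem _ ?_ ?_) (Subalgebra.sum_mem _ ?_)
        · exact Algebra.subset_adjoin ⟨ψ, List.mem_cons_self, rfl⟩
        · exact Algebra.adjoin_mono
            (Set.image_mono (fun x hx => List.mem_cons_of_mem _ hx)) hT₁mem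
        · intro i _
          exact Subalgebra.smul_mem _ (Algebra.adjoin_mono
            (Set.image_mono (fun x hx => List.mem_cons_of_mem _
              (List.eraseIdx_subset hx))) (hT₂mem i)) _
      · intro k
        have happly : ∀ (A B : Module.End ℂ (TensorAlgebra ℂ H)) (x : TensorAlgebra ℂ H),
            (A * B) x = A (B x) := fun A B x => rfl
        simp only [LinearMap.sub_apply, LinearMap.sum_apply, LinearMap.smul_apply, happly,
          LinearMap.add_apply]
        rw [hT₁ k, ← st'_append, hc' hc, ha' ha]
        have hlen : (L' ++ List.replicate k ξ).length = m + k := by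
          simp [hm]
        rw [hlen]
        have hsplit : ∑ i ∈ Finset.range (m + k),
            ((q : ℂ) ^ i * (inner ℂ ψ ((L' ++ List.replicate k ξ).getD i 0) : ℂ)) •
              st' ((L' ++ List.replicate k ξ).eraseIdx i)
            = ∑ i ∈ Finset.range m,
            ((q : ℂ) ^ i * (inner ℂ ψ ((L' ++ List.replicate k ξ).getD i 0) : ℂ)) •
              st' ((L' ++ List.replicate k ξ).eraseIdx i) := by
          symm
          apply Finset.sum_subset (Finset.range_subset_range.2 (Nat.le_add_right m k))
          intro i hi hni
          simp only [Finset.mem_range] at hi hni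
          have h1 : m ≤ i := Nat.le_of_not_lt hni
          have h2 : (L' ++ List.replicate k ξ).getD i 0 = ξ := by
            rw [List.getD_append_right _ _ _ _ (by simpa [hm] using h1)]
            have : i - L'.length < k := by omega
            rw [List.getD_eq_getElem _ _ (by simpa using this), List.getElem_replicate]
          rw [h2, (horth ψ (List.mem_cons_self)).1]
          simp
        rw [hsplit]
        have hterm : ∀ i ∈ Finset.range m,
            ((q : ℂ) ^ i * (inner ℂ ψ ((L' ++ List.replicate k ξ).getD i 0) : ℂ)) •
              st' ((L' ++ List.replicate k ξ).eraseIdx i)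
            = ((q : ℂ) ^ i * (inner ℂ ψ (L'.getD i 0) : ℂ)) •
              (st' (L'.eraseIdx ↑i) * st' (List.replicate k ξ)) := by
          intro i hi
          simp only [Finset.mem_range] at hi
          rw [List.getD_append _ _ _ _ (by simpa [hm] using hi),
            List.eraseIdx_append_of_lt_length (by simpa [hm] using hi), st'_append]
        rw [Finset.sum_congr rfl hterm]
        have hfin : ∑ i ∈ Finset.range m,
            ((q : ℂ) ^ i * (inner ℂ ψ (L'.getD i 0) : ℂ)) •
              (st' (L'.eraseIdx i) * st' (List.replicate k ξ))
            = ∑ i : Fin m, ((q : ℂ) ^ (i : ℕ) * (inner ℂ ψ (L'.getD i 0) : ℂ)) •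
              (T₂ i) (st' (List.replicate k ξ)) := by
          rw [← Fin.sum_univ_eq_sum_range (fun i => ((q : ℂ) ^ i *
            (inner ℂ ψ (L'.getD i 0) : ℂ)) • (st' (L'.eraseIdx i) * st' (List.replicate k ξ)))]
          exact Finset.sum_congr rfl fun i _ => by rw [hT₂ i k]
        rw [hfin]
        have : st' (ψ :: (L' ++ List.replicate k ξ)) = st' (ψ :: L') * st' (List.replicate k ξ) := by
          rw [show ψ :: (L' ++ List.replicate k ξ) = (ψ :: L') ++ List.replicate k ξ from rfl,
            st'_append]
        rw [this]
        exact add_sub_cancel_right _ _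

/-- If `⟨ξᵢ, ξ⟩ = 0 = ⟨ξ, ξᵢ⟩` for all `i`, then there is an operator `T` in the unital
algebra generated by the field operators `s_{ξ₁}, …, s_{ξₙ}` with
`T (ξ^{⊗k}) = ξ₁ ⊗ ⋯ ⊗ ξₙ ⊗ ξ^{⊗k}` for every `k ≥ 0`. -/
theorem stmt8 (q : ℝ) (c a : H → Module.End ℂ (TensorAlgebra ℂ H))
    (hc : IsCreation c) (ha : IsAnnihilation q a)
    (n : ℕ) (ξf : Fin n → H) (ξ : H)
    (horth : ∀ i, (inner ℂ (ξf i) ξ : ℂ) = 0 ∧ (inner ℂ ξ (ξf i) : ℂ) = 0) :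
    ∃ T : Module.End ℂ (TensorAlgebra ℂ H),
      T ∈ Algebra.adjoin ℂ (Set.range fun i => c (ξf i) + a (ξf i)) ∧
      ∀ k : ℕ, T (st k fun _ => ξ) = st n ξf * st k (fun _ => ξ) := by
  obtain ⟨T, hTmem, hT⟩ := main_aux q c a hc ha ξ n (List.ofFn ξf) (by simp)
    (by intro x hx; obtain ⟨i, rfl⟩ := List.mem_ofFn.1 hx; exact horth i)
  refine ⟨T, ?_, ?_⟩
  · convert hTmem using 2
    ext x
    simp [List.mem_ofFn, Set.range_comp]
  · intro k
    have := hT k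
    rw [st_eq_st' n ξf, st_eq_st' k (fun _ => ξ), List.ofFn_const]
    exact this
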